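/- Let A, B, C, D be real matrices of appropriate sizes and X a Hermitian complex matrix with real part X_Re. Define W(X) as the block matrix [[-AᵀX - XA, Cᵀ - XB],[C - BᵀX, Dᵀ + D]]. If W(X) is positive semidefinite (resp. positive definite), then W(X_Re) is positive semidefinite (resp. positive definite). -/

import Mathlib

open Matrix
open scoped ComplexOrder

private lemma quad_re {k : Type*} [Fintype k] (M : Matrix k k ℂ) (x : k → ℝ) :
    x ⬝ᵥ (M.map Complex.re) *ᵥ x
      = (star (fun i => (x i : ℂ)) ⬝ᵥ M *ᵥ (fun i => (x i : ℂ))).re := by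
  simp [dotProduct, mulVec, Complex.re_sum, Complex.mul_re, Complex.ofReal_def,
    Finset.mul_sum, mul_comm, mul_assoc, mul_left_comm]

private lemma herm_map_re {k : Type*} [Fintype k] {M : Matrix k k ℂ}
    (h : M.IsHermitian) : (M.map Complex.re).IsHermitian := by
  ext i j
  have := h.apply i j
  simp only [conjTranspose_apply, map_apply, star_trivial]
  rw [← this]
  simp

private lemma posSemidef_map_re {k : Type*} [Fintype k] {M : Matrix k k ℂ}
    (h : M.PosSemidef) : (M.map Complex.re).PosSemidef := by
  refine posSemidef_iff_dotProduct_mulVec.2 ⟨herm_map_re h.1, fun x => ?_⟩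
  have h2 := (posSemidef_iff_dotProduct_mulVec.1 h).2 (fun i => (x i : ℂ))
  rw [Complex.nonneg_iff] at h2
  simpa [quad_re] using h2.1

private lemma posDef_map_re {k : Type*} [Fintype k] {M : Matrix k k ℂ}
    (h : M.PosDef) : (M.map Complex.re).PosDef := by
  refine posDef_iff_dotProduct_mulVec.2 ⟨herm_map_re h.1, fun x hx => ?_⟩
  have hz : (fun i => (x i : ℂ)) ≠ 0 := by
    intro hc
    apply hx
    funext i
    have := congrFun hc i
    simpa using this
  have h2 := (posDef_iff_dotProduct_mulVec.1 h).2 hz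
  rw [Complex.pos_iff] at h2
  simpa [quad_re] using h2.1

theorem stmt1 {n m : ℕ}
    (A : Matrix (Fin n) (Fin n) ℝ) (B : Matrix (Fin n) (Fin m) ℝ)
    (C : Matrix (Fin m) (Fin n) ℝ) (D : Matrix (Fin m) (Fin m) ℝ)
    (X : Matrix (Fin n) (Fin n) ℂ) (hX : X.IsHermitian) :
    (((Matrix.fromBlocks
        (-((A.map Complex.ofReal)ᴴ * X) - X * A.map Complex.ofReal)
        ((C.map Complex.ofReal)ᴴ - X * B.map Complex.ofReal)
        (C.map Complex.ofReal - (B.map Complex.ofReal)ᴴ * X)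
        ((D.map Complex.ofReal)ᴴ + D.map Complex.ofReal)).PosSemidef →
      (Matrix.fromBlocks
        (-(Aᵀ * X.map Complex.re) - X.map Complex.re * A)
        (Cᵀ - X.map Complex.re * B)
        (C - Bᵀ * X.map Complex.re)
        (Dᵀ + D)).PosSemidef)) ∧
    (((Matrix.fromBlocks
        (-((A.map Complex.ofReal)ᴴ * X) - X * A.map Complex.ofReal)
        ((C.map Complex.ofReal)ᴴ - X * B.map Complex.ofReal)
        (C.map Complex.ofReal - (B.map Complex.ofReal)ᴴ * X)
        ((D.map Complex.ofReal)ᴴ + D.map Complex.ofReal)).PosDef →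
      (Matrix.fromBlocks
        (-(Aᵀ * X.map Complex.re) - X.map Complex.re * A)
        (Cᵀ - X.map Complex.re * B)
        (C - Bᵀ * X.map Complex.re)
        (Dᵀ + D)).PosDef)) := by
  have key : (Matrix.fromBlocks
        (-((A.map Complex.ofReal)ᴴ * X) - X * A.map Complex.ofReal)
        ((C.map Complex.ofReal)ᴴ - X * B.map Complex.ofReal)
        (C.map Complex.ofReal - (B.map Complex.ofReal)ᴴ * X)
        ((D.map Complex.ofReal)ᴴ + D.map Complex.ofReal)).map Complex.re
      = (Matrix.fromBlocks
        (-(Aᵀ * X.map Complex.re) - X.map Complex.re * A)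
        (Cᵀ - X.map Complex.re * B)
        (C - Bᵀ * X.map Complex.re)
        (Dᵀ + D)) := by
    have h11 : (-((A.map Complex.ofReal)ᴴ * X) - X * A.map Complex.ofReal).map Complex.re
        = -(Aᵀ * X.map Complex.re) - X.map Complex.re * A := by
      ext i j
      simp [mul_apply, conjTranspose_apply, Complex.re_sum, Complex.conj_ofReal,
        Complex.mul_re, Complex.ofReal_def]
    have h12 : ((C.map Complex.ofReal)ᴴ - X * B.map Complex.ofReal).map Complex.re
        = Cᵀ - X.map Complex.re * B := by
      ext i j
      simp [mul_apply, conjTranspose_apply, Complex.re_sum, Complex.conj_ofReal,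
        Complex.mul_re, Complex.ofReal_def]
    have h21 : (C.map Complex.ofReal - (B.map Complex.ofReal)ᴴ * X).map Complex.re
        = C - Bᵀ * X.map Complex.re := by
      ext i j
      simp [mul_apply, conjTranspose_apply, Complex.re_sum, Complex.conj_ofReal,
        Complex.mul_re, Complex.ofReal_def]
    have h22 : ((D.map Complex.ofReal)ᴴ + D.map Complex.ofReal).map Complex.re
        = Dᵀ + D := by
      ext i j
      simp [conjTranspose_apply, Complex.conj_ofReal]
    rw [Matrix.fromBlocks_map, h11, h12, h21, h22]
  constructor
  · intro h
    rw [← key]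
    exact posSemidef_map_re h
  · intro h
    rw [← key]
    exact posDef_map_re h
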